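/- Optimal value of the simplified MUST-M problem in case A: assume 0 < γ ≤ 1/β, β > 0, Y ≥ 0, Z ≥ 0, and X̃' = X̃. Then the minimum of ∑_v (x_v + γ·y_v) over all feasible pairs (x, y) exists, is attained by a feasible pair, and equals X̃ − (1/β − γ)·min(Y, Z/γ, β·X̃). -/

import Mathlib

open Finset

/-- Feasibility for the simplified MUST-M problem. -/
def Feasible {V : Type*} [Fintype V] (xt : V → ℝ) (β γ X' Y Z : ℝ)
    (x y : V → ℝ) : Prop :=
  (∀ v, 0 ≤ x v) ∧ (∀ v, 0 ≤ y v) ∧ (∀ v, xt v ≤ x v + (1 / β) * y v) ∧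
  (∑ v, (x v + γ * y v)) ≤ X' ∧ (∑ v, y v) ≤ Y ∧ (∑ v, γ * y v) ≤ Z

/-- Optimal value of the simplified MUST-M problem in case A, when
`X̃' = X̃`: the minimum objective value exists, is attained, and equals
`X̃ − (1/β − γ)·min(Y, Z/γ, β·X̃)`. -/
theorem mustm_caseA_optimal_value {V : Type*} [Fintype V]
    (xt : V → ℝ) (β γ Y Z : ℝ)
    (hxt : ∀ v, 0 ≤ xt v) (hβ : 0 < β) (hγ : 0 < γ) (hγβ : γ ≤ 1 / β)
    (hY : 0 ≤ Y) (hZ : 0 ≤ Z) :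
    IsLeast
      {c : ℝ | ∃ x y : V → ℝ,
        Feasible xt β γ (∑ v, xt v) Y Z x y ∧ c = ∑ v, (x v + γ * y v)}
      ((∑ v, xt v) - (1 / β - γ) * min Y (min (Z / γ) (β * ∑ v, xt v))) := by
  set X : ℝ := ∑ v, xt v with hXdef
  have hX : 0 ≤ X := Finset.sum_nonneg fun v _ => hxt v
  set m : ℝ := min Y (min (Z / γ) (β * X)) with hmdef
  have hm0 : 0 ≤ m :=
    le_min hY (le_min (div_nonneg hZ hγ.le) (by positivity))
  have hmY : m ≤ Y := min_le_left _ _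
  have hmZ : m ≤ Z / γ := le_trans (min_le_right _ _) (min_le_left _ _)
  have hmX : m ≤ β * X := le_trans (min_le_right _ _) (min_le_right _ _)
  have hβγ : 0 ≤ 1 / β - γ := by linarith
  have hβγ' : 0 ≤ 1 / β - γ := hβγ -- keep
  constructor
  · -- membership
    set s : ℝ := m / (β * X) with hsdef
    have hm0' : X = 0 → m = 0 := by
      intro h0
      exact le_antisymm (by simpa [h0] using hmX) hm0
    have hkey : s * (β * X) = m := by
      rcases eq_or_lt_of_le hX with h0 | hpos
      · simp [hsdef, ← h0, hm0' h0.symm]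
      · rw [hsdef]; field_simp
    have hsX : s * X = m / β := by
      rcases eq_or_lt_of_le hX with h0 | hpos
      · simp [hsdef, ← h0, hm0' h0.symm]
      · rw [hsdef]; field_simp
    have hs0 : 0 ≤ s := div_nonneg hm0 (by positivity)
    have hs1 : s ≤ 1 := by
      rcases eq_or_lt_of_le hX with h0 | hpos
      · simp [hsdef, ← h0]
      · rw [hsdef, div_le_one (by positivity)]; exact hmX
    have hsum : (∑ v, ((1 - s) * xt v + γ * (s * β * xt v)))
        = (1 - s) * X + γ * (s * β * X) := by
      rw [Finset.sum_add_distrib, ← Finset.mul_sum, ← Finset.mul_sum, ← Finset.mul_sum]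
    have he : (1 - s) * X + γ * (s * β * X) = X - (1 / β - γ) * m := by
      linear_combination γ * hkey - hsX
    refine ⟨fun v => (1 - s) * xt v, fun v => s * β * xt v, ⟨?_, ?_, ?_, ?_, ?_, ?_⟩, ?_⟩
    · intro v; exact mul_nonneg (by linarith) (hxt v)
    · intro v; exact mul_nonneg (mul_nonneg hs0 hβ.le) (hxt v)
    · intro v
      have : (1 - s) * xt v + 1 / β * (s * β * xt v) = xt v := by
        field_simp; ring
      rw [this]
    · rw [hsum, he]; nlinarith [hm0, hβγ]
    · have h1 : (∑ v, s * β * xt v) = s * (β * X) := by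
        rw [← Finset.mul_sum]; ring
      rw [h1, hkey]; exact hmY
    · have h1 : (∑ v, γ * (s * β * xt v)) = γ * (s * (β * X)) := by
        rw [← Finset.mul_sum, ← Finset.mul_sum]; ring
      rw [h1, hkey]
      rw [le_div_iff₀ hγ] at hmZ; linarith [hmZ]
    · rw [hsum, he]
  · -- lower bound
    rintro c ⟨x, y, ⟨hx0, hy0, hbase, hsum, hYc, hZc⟩, rfl⟩
    have hpt : ∀ v, xt v - (1 / β - γ) * min (y v) (β * xt v) ≤ x v + γ * y v := by
      intro v
      rcases le_total (y v) (β * xt v) with h | h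
      · rw [min_eq_left h]
        have := hbase v
        have hb : 1 / β * y v = y v / β := by ring
        nlinarith [hx0 v, hy0 v]
      · rw [min_eq_right h]
        have h1 : γ * (β * xt v) ≤ γ * y v := by nlinarith
        have h2 : xt v - (1 / β - γ) * (β * xt v) = γ * (β * xt v) := by
          field_simp; ring
        nlinarith [hx0 v]
    have hsumpt : X - (1 / β - γ) * (∑ v, min (y v) (β * xt v))
        ≤ ∑ v, (x v + γ * y v) := by
      calc X - (1 / β - γ) * (∑ v, min (y v) (β * xt v))
          = ∑ v, (xt v - (1 / β - γ) * min (y v) (β * xt v)) := by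
            rw [Finset.sum_sub_distrib, ← Finset.mul_sum]
        _ ≤ ∑ v, (x v + γ * y v) := Finset.sum_le_sum fun v _ => hpt v
    have hMle : (∑ v, min (y v) (β * xt v)) ≤ m := by
      have hSy : (∑ v, y v) ≤ Z / γ := by
        rw [le_div_iff₀ hγ]
        calc (∑ v, y v) * γ = ∑ v, γ * y v := by rw [Finset.sum_mul]; congr 1; ext v; ring
          _ ≤ Z := hZc
      have h1 : (∑ v, min (y v) (β * xt v)) ≤ ∑ v, y v :=
        Finset.sum_le_sum fun v _ => min_le_left _ _
      have h2 : (∑ v, min (y v) (β * xt v)) ≤ β * X := by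
        calc (∑ v, min (y v) (β * xt v)) ≤ ∑ v, β * xt v :=
              Finset.sum_le_sum fun v _ => min_le_right _ _
          _ = β * X := by rw [← Finset.mul_sum]
      exact le_min (h1.trans hYc) (le_min (h1.trans hSy) h2)
    nlinarith [hsumpt, hMle, hβγ]
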